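/- Let f : ℝ^d → ℝ be convex and differentiable with minimizer x̄, let p ≥ 2, C > 0, and α_t = log p − log t, β_t = p log t + log C, γ_t = p log t. Suppose (X_t, Y_t) solves dX_t/dt = e^{α_t−γ_t} Y_t, dY_t/dt = −e^{α_t+β_t+γ_t} ∇f(X_t) on (t₀, ∞). Then the function V(t) = (1/2)|X_t + e^{−γ_t} Y_t − x̄|² + e^{β_t}(f(X_t) − f(x̄)) is non-increasing in t. -/

import Mathlib

open Real

open scoped RealInnerProductSpace

lemma grad_convex_ineq {d : ℕ} {f : EuclideanSpace ℝ (Fin d) → ℝ}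
    (hconv : ConvexOn ℝ Set.univ f) (hdiff : Differentiable ℝ f)
    (x y : EuclideanSpace ℝ (Fin d)) :
    f x + ⟪gradient f x, y - x⟫ ≤ f y := by
  set c : ℝ →ᵃ[ℝ] EuclideanSpace ℝ (Fin d) := AffineMap.lineMap x y with hcdef
  have hg : ConvexOn ℝ Set.univ (f ∘ c) := by
    simpa using hconv.comp_affineMap c
  have hc : ∀ s : ℝ, HasDerivAt (fun s : ℝ => c s) (y - x) s := by
    intro s
    have h1 : HasDerivAt (fun s : ℝ => s • (y - x) + x) ((1:ℝ) • (y - x)) s :=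
      ((hasDerivAt_id s).smul_const (y - x)).add_const x
    simp only [one_smul] at h1
    apply h1.congr_of_eventuallyEq
    filter_upwards with u
    simp [hcdef, AffineMap.lineMap_apply_module']
  have hder : HasDerivAt (f ∘ c) ⟪gradient f x, y - x⟫ 0 := by
    have hF : HasFDerivAt f (InnerProductSpace.toDual ℝ _ (gradient f x)) (c 0) := by
      rw [hcdef, AffineMap.lineMap_apply_zero]
      exact (hdiff x).hasGradientAt
    have := hF.comp_hasDerivAt 0 (hc 0)
    simpa [InnerProductSpace.toDual_apply_apply] using this
  have hsl := hg.le_slope_of_hasDerivAt (Set.mem_univ 0) (Set.mem_univ 1) zero_lt_one hder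
  rw [slope_def_field] at hsl
  simp only [Function.comp_apply, hcdef, AffineMap.lineMap_apply_zero,
    AffineMap.lineMap_apply_one, div_one, sub_zero] at hsl
  linarith

theorem nesterov_lyapunov_nonincreasing (d : ℕ) (p C t₀ : ℝ)
    (hp : 2 ≤ p) (hC : 0 < C) (ht₀ : 0 < t₀)
    (f : EuclideanSpace ℝ (Fin d) → ℝ)
    (hconv : ConvexOn ℝ Set.univ f) (hdiff : Differentiable ℝ f)
    (xbar : EuclideanSpace ℝ (Fin d)) (hmin : ∀ x, f xbar ≤ f x)
    (α β γ : ℝ → ℝ)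
    (hα : ∀ t, α t = Real.log p - Real.log t)
    (hβ : ∀ t, β t = p * Real.log t + Real.log C)
    (hγ : ∀ t, γ t = p * Real.log t)
    (X Y : ℝ → EuclideanSpace ℝ (Fin d))
    (hX : ∀ t ∈ Set.Ioi t₀, HasDerivAt X (Real.exp (α t - γ t) • Y t) t)
    (hY : ∀ t ∈ Set.Ioi t₀,
      HasDerivAt Y (-(Real.exp (α t + β t + γ t)) • gradient f (X t)) t)
    (V : ℝ → ℝ)
    (hV : ∀ t, V t = (1/2) * ‖X t + Real.exp (-γ t) • Y t - xbar‖^2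
        + Real.exp (β t) * (f (X t) - f xbar)) :
    AntitoneOn V (Set.Ioi t₀) := by
  have hp0 : (0:ℝ) < p := by linarith
  have hαf : α = fun t => Real.log p - Real.log t := funext hα
  have hβf : β = fun t => p * Real.log t + Real.log C := funext hβ
  have hγf : γ = fun t => p * Real.log t := funext hγ
  subst hαf hβf hγf
  have key : ∀ t ∈ Set.Ioi t₀, HasDerivAt V
      ((p/t) * Real.exp (p * Real.log t + Real.log C) *
        ((f (X t) - f xbar) - ⟪gradient f (X t), X t - xbar⟫)) t := by
    intro t ht
    have ht0 : (0:ℝ) < t := ht₀.trans ht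
    have hXd := hX t ht
    have hYd := hY t ht
    set G := gradient f (X t) with hG
    set a := Real.exp (-(p * Real.log t)) with ha
    set b := Real.exp (p * Real.log t + Real.log C) with hb
    set E2 := Real.exp (Real.log p - Real.log t + (p * Real.log t + Real.log C)
      + p * Real.log t) with hE2def
    have hE1 : Real.exp (Real.log p - Real.log t - p * Real.log t) = (p/t) * a := by
      rw [ha, show Real.log p - Real.log t - p * Real.log t
        = (Real.log p - Real.log t) + (-(p * Real.log t)) by ring,
        Real.exp_add, Real.exp_sub, Real.exp_log hp0, Real.exp_log ht0]
    have hE2 : a * E2 = (p/t) * b := by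
      rw [ha, hb, hE2def, ← Real.exp_add,
        show -(p * Real.log t) + (Real.log p - Real.log t + (p * Real.log t + Real.log C)
          + p * Real.log t) = (Real.log p - Real.log t) + (p * Real.log t + Real.log C) by ring,
        Real.exp_add, Real.exp_sub, Real.exp_log hp0, Real.exp_log ht0]
    -- scalar derivatives
    have hlog : HasDerivAt Real.log t⁻¹ t := Real.hasDerivAt_log ht0.ne'
    have hγd : HasDerivAt (fun s => p * Real.log s) (p * t⁻¹) t := hlog.const_mul p
    have he3 : HasDerivAt (fun s => Real.exp (-(p * Real.log s))) (a * -(p * t⁻¹)) t := by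
      simpa [ha, mul_comm] using hγd.neg.exp
    have he4 : HasDerivAt (fun s => Real.exp (p * Real.log s + Real.log C)) (b * (p * t⁻¹)) t := by
      simpa [hb] using (hγd.add_const (Real.log C)).exp
    -- derivative of Z
    have hZ : HasDerivAt (fun s => X s + Real.exp (-(p * Real.log s)) • Y s - xbar)
        (Real.exp (Real.log p - Real.log t - p * Real.log t) • Y t
          + (a • (-E2 • G) + (a * -(p * t⁻¹)) • Y t)) t :=
      (hXd.add (he3.smul hYd)).sub_const xbar
    set Z' := Real.exp (Real.log p - Real.log t - p * Real.log t) • Y t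
          + (a • (-E2 • G) + (a * -(p * t⁻¹)) • Y t) with hZ'
    set Zt := X t + a • Y t - xbar with hZt
    have hI : HasDerivAt (fun s => ⟪X s + Real.exp (-(p * Real.log s)) • Y s - xbar,
        X s + Real.exp (-(p * Real.log s)) • Y s - xbar⟫) (⟪Zt, Z'⟫ + ⟪Z', Zt⟫) t :=
      hZ.inner ℝ hZ
    -- derivative of f ∘ X
    have hfX : HasDerivAt (fun s => f (X s))
        (Real.exp (Real.log p - Real.log t - p * Real.log t) * ⟪G, Y t⟫) t := by
      have hF : HasFDerivAt f (InnerProductSpace.toDual ℝ _ G) (X t) := (hdiff (X t)).hasGradientAt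
      have h := hF.comp_hasDerivAt t hXd
      refine h.congr_deriv ?_
      rw [InnerProductSpace.toDual_apply_apply, real_inner_smul_right]
    have hterm2 : HasDerivAt (fun s => Real.exp (p * Real.log s + Real.log C) * (f (X s) - f xbar))
        (b * (p * t⁻¹) * (f (X t) - f xbar)
          + b * (Real.exp (Real.log p - Real.log t - p * Real.log t) * ⟪G, Y t⟫)) t :=
      he4.mul (hfX.sub_const (f xbar))
    have hW : HasDerivAt V
        ((1/2) * (⟪Zt, Z'⟫ + ⟪Z', Zt⟫)
          + (b * (p * t⁻¹) * (f (X t) - f xbar)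
            + b * (Real.exp (Real.log p - Real.log t - p * Real.log t) * ⟪G, Y t⟫))) t := by
      have := (hI.const_mul (1/2:ℝ)).add hterm2
      apply this.congr_of_eventuallyEq
      filter_upwards with u
      rw [hV u]
      rw [← real_inner_self_eq_norm_sq]
      rfl
    have heq : (1/2) * (⟪Zt, Z'⟫ + ⟪Z', Zt⟫)
          + (b * (p * t⁻¹) * (f (X t) - f xbar)
            + b * (Real.exp (Real.log p - Real.log t - p * Real.log t) * ⟪G, Y t⟫))
        = (p/t) * b * ((f (X t) - f xbar) - ⟪G, X t - xbar⟫) := by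
      have hZv : Z' = (-(p/t * b)) • G := by
        rw [hZ', hE1, ← hE2]
        module
      rw [real_inner_comm Zt Z', hZv, hZt]
      simp only [real_inner_smul_left, inner_sub_right, inner_add_right, real_inner_smul_right,
        inner_sub_left, inner_add_left]
      rw [hE1, real_inner_comm G (X t), real_inner_comm G (Y t), real_inner_comm G xbar]
      ring
    rw [heq] at hW
    exact hW
  have hcont : ContinuousOn V (Set.Ioi t₀) := fun t ht =>
    ((key t ht).continuousAt).continuousWithinAt
  apply antitoneOn_of_deriv_nonpos (convex_Ioi t₀) hcont
  · intro t ht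
    rw [interior_Ioi] at ht
    exact ((key t ht).differentiableAt).differentiableWithinAt
  · intro t ht
    rw [interior_Ioi] at ht
    rw [(key t ht).deriv]
    have ht0 : (0:ℝ) < t := ht₀.trans ht
    have h1 : f (X t) - f xbar - ⟪gradient f (X t), X t - xbar⟫ ≤ 0 := by
      have := grad_convex_ineq hconv hdiff (X t) xbar
      have h2 : ⟪gradient f (X t), xbar - X t⟫ = -⟪gradient f (X t), X t - xbar⟫ := by
        rw [← inner_neg_right]; congr 1; abel
      rw [h2] at this
      linarith
    have h2 : (0:ℝ) ≤ p / t * Real.exp (p * Real.log t + Real.log C) :=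
      mul_nonneg (div_nonneg hp0.le ht0.le) (Real.exp_nonneg _)
    exact mul_nonpos_of_nonneg_of_nonpos h2 h1
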